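/- Let R be a Noetherian domain with fraction field K, T a finitely generated commutative R-algebra, Λ a T-algebra finitely generated as a T-module, and P a finitely generated Λ-module such that P ⊗_R K is a projective Λ ⊗_R K-module. Then there exists a nonzero f ∈ R such that P_f is a projective Λ_f-module. -/

import Mathlib

open TensorProduct

set_option linter.unusedSectionVars false
set_option maxHeartbeats 1000000
set_option synthInstance.maxHeartbeats 400000

universe u

section BaseChangeGadget

variable (R L B M : Type u) [CommRing R] [CommRing L] [Algebra R L]
  [Ring B] [Algebra R B] [AddCommGroup M] [Module R M] [Module B M] [IsScalarTower R B M]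
  [SMulCommClass R B M]

/-- The action of `B` on the base change `L ⊗[R] M` by `L`-linear endomorphisms. -/
noncomputable def bcRingHom : B →+* Module.End L (L ⊗[R] M) :=
  ((Module.End.baseChangeHom R L M).comp (Algebra.lsmul R R M : B →ₐ[R] Module.End R M)).toRingHom

/-- The `B ⊗[R] L`-module structure on `L ⊗[R] M`: the base change of the `B`-module `M`
along `R → L`, viewed as a module over the base-changed algebra `B ⊗[R] L`.
Here `(b ⊗ l) • (l' ⊗ m) = (l * l') ⊗ (b • m)`. -/
noncomputable def bcModule : Module (B ⊗[R] L) (L ⊗[R] M) :=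
  letI : Module B (L ⊗[R] M) := Module.compHom _ (bcRingHom R L B M)
  haveI : SMulCommClass B L (L ⊗[R] M) :=
    ⟨fun b l x => ((bcRingHom R L B M b).map_smul l x)⟩
  haveI : IsScalarTower R B (L ⊗[R] M) := by
    refine ⟨fun r b x => ?_⟩
    show bcRingHom R L B M (r • b) x = r • bcRingHom R L B M b x
    rw [Algebra.smul_def, map_mul, Module.End.mul_apply]
    rw [show bcRingHom R L B M (algebraMap R B r)
        = algebraMap R (Module.End L (L ⊗[R] M)) r from
      ((Module.End.baseChangeHom R L M).comp
        (Algebra.lsmul R R M : B →ₐ[R] Module.End R M)).commutes r]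
    rw [Module.algebraMap_end_apply]
  TensorProduct.Algebra.module (R := R) (A := B) (B := L) (M := L ⊗[R] M)

attribute [local instance] bcModule

lemma bcRingHom_tmul (b : B) (l : L) (m : M) :
    bcRingHom R L B M b (l ⊗ₜ[R] m) = l ⊗ₜ[R] (b • m) := by
  simp [bcRingHom, Module.End.baseChangeHom, AlgHom.ofLinearMap_apply,
    LinearMap.baseChangeHom_apply]
  show LinearMap.baseChange L (Algebra.lsmul R R M b) (l ⊗ₜ[R] m) = _
  simp

lemma bc_smul_def (b : B) (l : L) (x : L ⊗[R] M) :
    (b ⊗ₜ[R] l) • x = (bcRingHom R L B M b) (l • x) := rfl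

lemma bc_smul_tmul (b : B) (l l' : L) (m : M) :
    (b ⊗ₜ[R] l) • (l' ⊗ₜ[R] m) = (l * l') ⊗ₜ[R] (b • m) := by
  rw [bc_smul_def, smul_tmul', smul_eq_mul, bcRingHom_tmul]

lemma bc_rsmul (r : R) (x : L ⊗[R] M) :
    ((algebraMap R B r) ⊗ₜ[R] (1 : L)) • x = r • x := by
  induction x with
  | zero => simp
  | tmul l' m => rw [bc_smul_tmul, one_mul, algebraMap_smul, tmul_smul]
  | add x y hx hy => rw [smul_add, hx, hy, smul_add]

lemma bc_smul_comm (a : B ⊗[R] L) (r : R) (x : L ⊗[R] M) :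
    a • r • x = r • a • x := by
  rw [← bc_rsmul R L B M r x, ← mul_smul, ← bc_rsmul R L B M r (a • x), ← mul_smul]
  congr 1
  have h : (algebraMap R B r ⊗ₜ[R] (1 : L)) = algebraMap R (B ⊗[R] L) r := by
    rw [Algebra.TensorProduct.algebraMap_apply]
  rw [h]
  exact (Algebra.commutes r a).symm

variable (N : Type u) [AddCommGroup N] [Module R N] [Module B N] [IsScalarTower R B N]
  [SMulCommClass R B N]

lemma bc_map_rsmul (σ : (L ⊗[R] M) →ₗ[B ⊗[R] L] (L ⊗[R] N)) (r : R) (x : L ⊗[R] M) :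
    σ (r • x) = r • σ x := by
  rw [← bc_rsmul R L B M r x, map_smul, bc_rsmul]

/-- Base change of a `B`-linear map, as a `B ⊗[R] L`-linear map. -/
noncomputable def bcMap (φ : M →ₗ[B] N) : (L ⊗[R] M) →ₗ[B ⊗[R] L] (L ⊗[R] N) where
  toFun := LinearMap.baseChange L (φ.restrictScalars R)
  map_add' := map_add _
  map_smul' a x := by
    simp only [RingHom.id_apply]
    induction a with
    | zero => rw [zero_smul, zero_smul, map_zero]
    | add a b ha hb => rw [add_smul, add_smul, map_add, ha, hb]
    | tmul b l =>
      induction x with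
      | zero => rw [smul_zero, map_zero, smul_zero]
      | add x y hx hy => rw [smul_add, map_add, map_add, hx, hy, smul_add]
      | tmul l' m =>
        rw [bc_smul_tmul, LinearMap.baseChange_tmul, LinearMap.baseChange_tmul, bc_smul_tmul]
        simp [map_smul]

lemma bcMap_tmul (φ : M →ₗ[B] N) (l : L) (m : M) :
    bcMap R L B M N φ (l ⊗ₜ[R] m) = l ⊗ₜ[R] (φ m) := by
  simp [bcMap]

lemma bcMap_surjective (φ : M →ₗ[B] N) (hφ : Function.Surjective φ) :
    Function.Surjective (bcMap R L B M N φ) := by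
  intro y
  induction y with
  | zero => exact ⟨0, map_zero _⟩
  | add x y hx hy =>
    obtain ⟨x', hx'⟩ := hx; obtain ⟨y', hy'⟩ := hy
    exact ⟨x' + y', by rw [map_add, hx', hy']⟩
  | tmul l n =>
    obtain ⟨m, rfl⟩ := hφ n
    exact ⟨l ⊗ₜ m, bcMap_tmul R L B M N φ l m⟩

end BaseChangeGadget

attribute [local instance] bcModule

section Combo

variable {A M : Type*} [Semiring A] [AddCommMonoid M] [Module A M] {m : ℕ}

/-- The linear map `(Fin m → A) →ₗ[A] M` sending `x` to `∑ j, x j • v j`. -/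
def combo (v : Fin m → M) : (Fin m → A) →ₗ[A] M where
  toFun x := ∑ j, x j • v j
  map_add' x y := by simp [add_smul, Finset.sum_add_distrib]
  map_smul' a x := by simp [mul_smul, Finset.smul_sum]

lemma combo_apply (v : Fin m → M) (x : Fin m → A) : combo v x = ∑ j, x j • v j := rfl

lemma combo_single (v : Fin m → M) (i : Fin m) : combo v (Pi.single i (1 : A)) = v i := by
  classical
  rw [combo_apply, Finset.sum_eq_single i]
  · simp
  · intro j _ hj
    simp [Pi.single_apply, hj]
  · simp

end Combo

theorem generically_projective
    (R T Λ P : Type u) [CommRing R] [IsDomain R] [IsNoetherianRing R]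
    [CommRing T] [Algebra R T] [Algebra.FiniteType R T]
    [Ring Λ] [Algebra T Λ] [Module.Finite T Λ] [Algebra R Λ] [IsScalarTower R T Λ]
    [AddCommGroup P] [Module R P] [Module Λ P] [IsScalarTower R Λ P]
    [SMulCommClass R Λ P] [Module.Finite Λ P]
    (hproj : Module.Projective (Λ ⊗[R] FractionRing R) ((FractionRing R) ⊗[R] P)) :
    ∃ f : R, f ≠ 0 ∧
      Module.Projective (Λ ⊗[R] Localization.Away f) ((Localization.Away f) ⊗[R] P) := by
  classical
  haveI := hproj
  set K := FractionRing R with hK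
  set S := nonZeroDivisors R with hS
  -- Noetherian facts
  haveI : IsNoetherianRing T := Algebra.FiniteType.isNoetherianRing R T
  haveI : IsNoetherianRing Λ := isNoetherian_of_tower T (inferInstance : IsNoetherian T Λ)
  -- generators of P over Λ
  obtain ⟨m, gens, hgens⟩ := Module.Finite.exists_fin (R := Λ) (M := P)
  set π : (Fin m → Λ) →ₗ[Λ] P := combo gens with hπdef
  have hπ : Function.Surjective π := by
    rw [← LinearMap.range_eq_top, ← top_le_iff, ← hgens, Submodule.span_le]
    rintro _ ⟨j, rfl⟩
    exact ⟨Pi.single j 1, by rw [hπdef]; exact combo_single (A := Λ) gens j⟩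
  -- localized-module instances
  haveI hloc1 : IsLocalizedModule S ((TensorProduct.mk R K (Fin m → Λ)) 1) :=
    (isLocalizedModule_iff_isBaseChange S K _).mpr (TensorProduct.isBaseChange R (Fin m → Λ) K)
  haveI hloc2 : IsLocalizedModule S ((TensorProduct.mk R K P) 1) :=
    (isLocalizedModule_iff_isBaseChange S K _).mpr (TensorProduct.isBaseChange R P K)
  -- base-changed surjection and its section
  set πK := bcMap R K Λ (Fin m → Λ) P π with hπKdef
  obtain ⟨σ, hσ⟩ := Module.projective_lifting_property πK LinearMap.id
    (bcMap_surjective R K Λ (Fin m → Λ) P π hπ)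
  -- clear denominators
  have Hv : ∀ i : Fin m, ∃ p : (Fin m → Λ) × S,
      (p.2 : R) • σ ((1:K) ⊗ₜ[R] gens i) = (1:K) ⊗ₜ[R] p.1 := by
    intro i
    obtain ⟨p, hp⟩ := IsLocalizedModule.surj S ((TensorProduct.mk R K (Fin m → Λ)) 1)
      (σ ((1:K) ⊗ₜ[R] gens i))
    exact ⟨p, by simpa [Submonoid.smul_def] using hp⟩
  choose vs hvs using Hv
  set f : S := ∏ i, (vs i).2 with hfdef
  set V : Fin m → (Fin m → Λ) :=
    fun i => (∏ j ∈ Finset.univ.erase i, ((vs j).2 : R)) • (vs i).1 with hVdef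
  have hV : ∀ i, (f : R) • σ ((1:K) ⊗ₜ[R] gens i) = (1:K) ⊗ₜ[R] V i := by
    intro i
    have hf : (f : R) = (∏ j ∈ Finset.univ.erase i, ((vs j).2 : R)) * ((vs i).2 : R) := by
      rw [hfdef]
      push_cast
      rw [Finset.prod_erase_mul _ _ (Finset.mem_univ i)]
    rw [hf, mul_smul, hvs i, hVdef]
    exact (tmul_smul _ _ _).symm
  -- the auxiliary endomorphism
  set Tm : (Fin m → Λ) →ₗ[Λ] (Fin m → Λ) := combo V with hTmdef
  have hT : ∀ q : Fin m → Λ, π q = 0 → (1:K) ⊗ₜ[R] (Tm q) = (0 : K ⊗[R] (Fin m → Λ)) := by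
    intro q hq
    have h1 : (1:K) ⊗ₜ[R] (Tm q) = (f : R) • σ ((1:K) ⊗ₜ[R] (π q)) := by
      calc (1:K) ⊗ₜ[R] (Tm q) = ∑ i, (1:K) ⊗ₜ[R] (q i • V i) := by
            rw [hTmdef, combo_apply, tmul_sum]
        _ = ∑ i, (q i ⊗ₜ[R] (1:K)) • ((1:K) ⊗ₜ[R] V i) := by
            refine Finset.sum_congr rfl fun i _ => ?_
            rw [bc_smul_tmul, one_mul]
        _ = ∑ i, (q i ⊗ₜ[R] (1:K)) • ((f : R) • σ ((1:K) ⊗ₜ[R] gens i)) := by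
            refine Finset.sum_congr rfl fun i _ => ?_
            rw [hV i]
        _ = (f : R) • ∑ i, (q i ⊗ₜ[R] (1:K)) • σ ((1:K) ⊗ₜ[R] gens i) := by
            rw [Finset.smul_sum]
            exact Finset.sum_congr rfl fun i _ => bc_smul_comm R K Λ (Fin m → Λ) _ _ _
        _ = (f : R) • σ (∑ i, (q i ⊗ₜ[R] (1:K)) • ((1:K) ⊗ₜ[R] gens i)) := by
            rw [map_sum]
            exact congrArg _ (Finset.sum_congr rfl fun i _ => (map_smul σ _ _).symm)
        _ = (f : R) • σ ((1:K) ⊗ₜ[R] (π q)) := by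
            congr 1
            rw [hπdef, combo_apply, tmul_sum]
            refine congrArg _ (Finset.sum_congr rfl fun i _ => ?_)
            rw [bc_smul_tmul, one_mul]
    rw [h1, hq, tmul_zero, map_zero, smul_zero]
  -- finitely many generators of the kernel
  obtain ⟨Qs, hQs⟩ := IsNoetherian.noetherian (LinearMap.ker π)
  have HQ : ∀ q : {x // x ∈ Qs}, ∃ g : S, (g : R) • Tm (q : Fin m → Λ) = 0 := by
    rintro ⟨q, hq⟩
    have hqker : π q = 0 := by
      have : q ∈ LinearMap.ker π := hQs ▸ Submodule.subset_span hq
      exact LinearMap.mem_ker.mp this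
    have h0 : ((TensorProduct.mk R K (Fin m → Λ)) 1) (Tm q)
        = ((TensorProduct.mk R K (Fin m → Λ)) 1) 0 := by
      simpa using hT q hqker
    obtain ⟨c, hc⟩ := IsLocalizedModule.exists_of_eq (S := S) h0
    exact ⟨c, by simpa [Submonoid.smul_def] using hc⟩
  choose g hg using HQ
  -- comparison of π (V i) with f • gens i
  have Hh : ∀ i : Fin m, ∃ h : S,
      (h : R) • π (V i) = (h : R) • ((f : R) • gens i) := by
    intro i
    have key : (1:K) ⊗ₜ[R] (π (V i)) = (1:K) ⊗ₜ[R] ((f : R) • gens i) := by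
      have h1 : (1:K) ⊗ₜ[R] (π (V i)) = πK ((1:K) ⊗ₜ[R] V i) :=
        (bcMap_tmul R K Λ (Fin m → Λ) P π 1 (V i)).symm
      rw [h1, ← hV i, bc_map_rsmul R K Λ (Fin m → Λ) P πK]
      have h2 : πK (σ ((1:K) ⊗ₜ[R] gens i)) = (1:K) ⊗ₜ[R] gens i := by
        have := congrArg (fun φ => φ ((1:K) ⊗ₜ[R] gens i)) hσ
        simpa using this
      rw [h2, tmul_smul]
    have h0 : ((TensorProduct.mk R K P) 1) (π (V i))
        = ((TensorProduct.mk R K P) 1) ((f : R) • gens i) := by simpa using key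
    obtain ⟨c, hc⟩ := IsLocalizedModule.exists_of_eq (S := S) h0
    exact ⟨c, by simpa [Submonoid.smul_def] using hc⟩
  choose hh hhh using Hh
  -- the denominator
  set G : S := ∏ q : {x // x ∈ Qs}, g q with hGdef
  set Hs : S := ∏ i, hh i with hHsdef
  set fS : S := f * G * Hs with hfSdef
  refine ⟨(fS : R), nonZeroDivisors.ne_zero fS.2, ?_⟩
  set R' := Localization.Away (fS : R) with hR'def
  -- invertibility of divisors of fS
  have hunit : ∀ d : R, d ∣ (fS : R) → IsUnit (algebraMap R R' d) := by
    rintro d ⟨e, he⟩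
    have h0 : IsUnit (algebraMap R R' (fS : R)) :=
      IsLocalization.Away.algebraMap_isUnit (S := R') (fS : R)
    have h0' : IsUnit (algebraMap R R' d * algebraMap R R' e) := by
      rw [← map_mul, ← he]; exact h0
    exact isUnit_of_mul_isUnit_left h0'
  have hf_dvd : (f : R) ∣ (fS : R) := ⟨(G : R) * (Hs : R), by rw [hfSdef]; push_cast; ring⟩
  have hg_dvd : ∀ q : {x // x ∈ Qs}, ((g q : R)) ∣ (fS : R) := by
    intro q
    have h1 : (g q : R) ∣ (G : R) := by
      rw [hGdef]; push_cast
      exact Finset.dvd_prod_of_mem _ (Finset.mem_univ q)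
    exact h1.trans ⟨(f : R) * (Hs : R), by rw [hfSdef]; push_cast; ring⟩
  have hh_dvd : ∀ i : Fin m, ((hh i : R)) ∣ (fS : R) := by
    intro i
    have h1 : (hh i : R) ∣ (Hs : R) := by
      rw [hHsdef]; push_cast
      exact Finset.dvd_prod_of_mem _ (Finset.mem_univ i)
    exact h1.trans ⟨(f : R) * (G : R), by rw [hfSdef]; push_cast; ring⟩
  set uf : R'ˣ := (hunit (f : R) hf_dvd).unit with hufdef
  set ufi : R' := ↑uf⁻¹ with hufidef
  have huf : algebraMap R R' (f : R) * ufi = 1 := by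
    rw [hufidef, hufdef]
    exact_mod_cast (hunit (f : R) hf_dvd).unit.mul_inv
  -- the lifted map μ into the localized free module
  set w : Fin m → (Fin m → Λ ⊗[R] R') := fun i l => (V i l) ⊗ₜ[R] ufi with hwdef
  set μ : (Fin m → Λ) →ₗ[Λ] (Fin m → Λ ⊗[R] R') := combo w with hμdef
  have hμker : LinearMap.ker π ≤ LinearMap.ker μ := by
    rw [← hQs, Submodule.span_le]
    intro q hq
    have hq' : q ∈ Qs := Finset.mem_coe.mp hq
    have hgq : (g ⟨q, hq'⟩ : R) • Tm q = 0 := hg ⟨q, hq'⟩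
    simp only [SetLike.mem_coe, LinearMap.mem_ker]
    rw [hμdef]
    have : combo (A := Λ) w q = 0 := by
      funext l
      have h1 : combo (A := Λ) w q l = (Tm q l) ⊗ₜ[R] ufi := by
        rw [combo_apply]
        rw [Finset.sum_apply]
        have h2 : ∀ i, (q i • w i) l = (q i • V i l) ⊗ₜ[R] ufi := by
          intro i
          rw [Pi.smul_apply, hwdef]
          rw [smul_tmul']
        rw [Finset.sum_congr rfl fun i _ => h2 i, ← sum_tmul]
        congr 1
        rw [hTmdef, combo_apply, Finset.sum_apply]
        exact Finset.sum_congr rfl fun i _ => (Pi.smul_apply _ _ _).symm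
      rw [h1]
      have hu := hunit (g ⟨q, hq'⟩ : R) (hg_dvd ⟨q, hq'⟩)
      have hufi2 : ufi = (g ⟨q, hq'⟩ : R) • ((↑hu.unit⁻¹ : R') * ufi) := by
        rw [Algebra.smul_def, ← mul_assoc, hu.mul_val_inv, one_mul]
      have hTl : (g ⟨q, hq'⟩ : R) • (Tm q l) = 0 := by
        have := congrFun hgq l
        simpa using this
      rw [hufi2, tmul_smul, smul_tmul', hTl, zero_tmul]
      rfl
    exact this
  -- the section on P
  set e := π.quotKerEquivOfSurjective hπ with hedef
  set s0 : P →ₗ[Λ] (Fin m → Λ ⊗[R] R') :=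
    (Submodule.liftQ (LinearMap.ker π) μ hμker).comp e.symm.toLinearMap with hs0def
  have hs0 : ∀ x : Fin m → Λ, s0 (π x) = μ x := by
    intro x
    have he2 : e.symm (π x) = Submodule.Quotient.mk x := by
      rw [LinearEquiv.symm_apply_eq, hedef]
      simp [LinearMap.quotKerEquivOfSurjective, LinearEquiv.trans_apply]
    rw [hs0def]
    show (Submodule.liftQ _ μ hμker) (e.symm (π x)) = μ x
    rw [he2, Submodule.liftQ_apply]
  -- the A'-linear section on R' ⊗ P
  let b0 : R' →ₗ[R] P →ₗ[R] (Fin m → Λ ⊗[R] R') :=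
  { toFun := fun r =>
    { toFun := fun p => (((1:Λ) ⊗ₜ[R] r) : Λ ⊗[R] R') • s0 p
      map_add' := fun p q => by simp only [map_add, smul_add]
      map_smul' := fun a p => by
        simp only [RingHom.id_apply]
        rw [← algebraMap_smul Λ a p, map_smul, algebraMap_smul]
        funext j
        simp only [Pi.smul_apply, smul_eq_mul]
        exact mul_smul_comm _ _ _ }
    map_add' := fun r r' => by
      ext p
      simp only [LinearMap.coe_mk, AddHom.coe_mk, LinearMap.add_apply]
      rw [tmul_add, add_smul]
    map_smul' := fun a r => by
      ext p
      simp only [RingHom.id_apply, LinearMap.coe_mk, AddHom.coe_mk, LinearMap.smul_apply]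
      rw [tmul_smul, smul_assoc] }
  let Sadd : R' ⊗[R] P →ₗ[R] (Fin m → Λ ⊗[R] R') := TensorProduct.lift b0
  have hSadd : ∀ (r : R') (p : P),
      Sadd (r ⊗ₜ[R] p) = (((1:Λ) ⊗ₜ[R] r) : Λ ⊗[R] R') • s0 p := fun r p => rfl
  have hbl : ∀ (b : Λ) (x : Λ ⊗[R] R'), b • x = ((b ⊗ₜ[R] (1:R')) : Λ ⊗[R] R') * x := by
    intro b x
    induction x with
    | zero => rw [smul_zero, mul_zero]
    | tmul c r => rw [smul_tmul', Algebra.TensorProduct.tmul_mul_tmul, smul_eq_mul, one_mul]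
    | add x y hx hy => rw [smul_add, hx, hy, mul_add]
  let SL : (R' ⊗[R] P) →ₗ[Λ ⊗[R] R'] (Fin m → Λ ⊗[R] R') :=
  { toFun := Sadd
    map_add' := map_add Sadd
    map_smul' := by
      intro a x
      simp only [RingHom.id_apply]
      induction a with
      | zero => exact (congrArg Sadd (zero_smul (Λ ⊗[R] R') x)).trans ((map_zero Sadd).trans (zero_smul (Λ ⊗[R] R') (Sadd x)).symm)
      | add a b ha hb => rw [add_smul, add_smul, map_add, ha, hb]
      | tmul b l =>
        induction x with
        | zero => rw [smul_zero, map_zero, smul_zero]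
        | add x y hx hy => rw [smul_add, map_add, map_add, hx, hy, smul_add]
        | tmul l' p =>
          rw [bc_smul_tmul, hSadd, hSadd, map_smul]
          funext j
          simp only [Pi.smul_apply, smul_eq_mul, hbl]
          rw [← mul_assoc, ← mul_assoc, Algebra.TensorProduct.tmul_mul_tmul,
            Algebra.TensorProduct.tmul_mul_tmul]
          simp }
  -- the generators of R' ⊗ P and the evaluation map
  set X : Fin m → (R' ⊗[R] P) := fun j => (1:R') ⊗ₜ[R] gens j with hXdef
  set Pim : (Fin m → Λ ⊗[R] R') →ₗ[Λ ⊗[R] R'] (R' ⊗[R] P) := combo X with hPimdef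
  have hXspan : Submodule.span (Λ ⊗[R] R') (Set.range X) = ⊤ := by
    rw [Submodule.eq_top_iff']
    intro x
    induction x with
    | zero => exact Submodule.zero_mem _
    | add x y hx hy => exact Submodule.add_mem _ hx hy
    | tmul r p =>
      obtain ⟨y, rfl⟩ := hπ p
      have hXe : (r ⊗ₜ[R] (π y) : R' ⊗[R] P)
          = ∑ j, ((y j ⊗ₜ[R] r : Λ ⊗[R] R')) • X j := by
        rw [hπdef, combo_apply, tmul_sum]
        refine Finset.sum_congr rfl fun j _ => ?_
        rw [hXdef, bc_smul_tmul, mul_one]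
      rw [hXe]
      exact Submodule.sum_mem _ fun j _ =>
        Submodule.smul_mem _ _ (Submodule.subset_span ⟨j, rfl⟩)
  have hsplit : Pim.comp SL = LinearMap.id := by
    apply LinearMap.ext_on hXspan
    rintro _ ⟨i, rfl⟩
    rw [LinearMap.comp_apply, LinearMap.id_apply]
    have h1 : SL (X i) = w i := by
      show Sadd ((1:R') ⊗ₜ[R] gens i) = w i
      rw [hSadd]
      rw [show ((1:Λ) ⊗ₜ[R] (1:R') : Λ ⊗[R] R') = 1 from rfl, one_smul]
      have h2 : gens i = π (Pi.single i (1:Λ)) := by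
        rw [hπdef]; exact (combo_single (A := Λ) gens i).symm
      rw [h2, hs0, hμdef, combo_single (A := Λ)]
    rw [h1]
    have hu := hunit (hh i : R) (hh_dvd i)
    calc Pim (w i) = ∑ j, (w i j) • X j := by rw [hPimdef, combo_apply]
      _ = ∑ j, ufi ⊗ₜ[R] (V i j • gens j) := by
          refine Finset.sum_congr rfl fun j _ => ?_
          rw [hwdef, hXdef, bc_smul_tmul, mul_one]
      _ = ufi ⊗ₜ[R] (π (V i)) := by
          rw [← tmul_sum]
          congr 1
      _ = (1:R') ⊗ₜ[R] gens i := by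
          have hufi2 : ufi = (hh i : R) • ((↑hu.unit⁻¹ : R') * ufi) := by
            rw [Algebra.smul_def, ← mul_assoc, hu.mul_val_inv, one_mul]
          rw [hufi2, smul_tmul, hhh i, smul_smul, ← smul_tmul]
          congr 1
          rw [Algebra.smul_def, map_mul, mul_mul_mul_comm,
            hu.mul_val_inv, huf, one_mul]
  exact Module.Projective.of_split SL Pim hsplit
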